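/- Let Δ be the root system F_4 and let α be a short root. Then there exist exactly three sets {β_1}, {β_2}, {β_3} of short roots (up to sign of the second member in each matched pair, i.e., up to replacing β by the appropriate involution image) such that (α, β_i) is a matched pair (α + β_i and α − β_i are roots), and the resulting induced orthogonal pairs (α + β_i, α − β_i) have R_i = ±{α + β_i, α − β_i} contained in Δ_sin_i for i = 1, 2, 3, where Δ_sin1, Δ_sin2, Δ_sin3 is the partition of the long roots into {±e_1±e_2, ±e_3±e_4}, {±e_1±e_4, ±e_2±e_3}, {±e_1±e_3, ±e_2±e_4}. Concretely: for every short root α of F_4 and every i ∈ {1, 2, 3}, there exists a short root β, unique up to sign, such that α + β and α − β are both roots lying in ±Δ_sin_i. -/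

import Mathlib

open scoped RealInnerProductSpace

/-- The standard basis vector `e_i` of `ℝ⁴`. -/
noncomputable def e (i : Fin 4) : EuclideanSpace ℝ (Fin 4) :=
  EuclideanSpace.single i 1

/-- The set `{±e_i ± e_j}` for fixed `i, j`. -/
def pmSet (i j : Fin 4) : Set (EuclideanSpace ℝ (Fin 4)) :=
  {v | ∃ ε δ : ℝ, (ε = 1 ∨ ε = -1) ∧ (δ = 1 ∨ δ = -1) ∧ v = ε • e i + δ • e j}

/-- Long roots of `F₄`: `±e_i ± e_j`, `i < j`. -/
def LongF4 : Set (EuclideanSpace ℝ (Fin 4)) :=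
  {v | ∃ i j : Fin 4, i < j ∧ v ∈ pmSet i j}

/-- Short roots of `F₄`: `±e_i` together with `(1/2)(±e₁ ± e₂ ± e₃ ± e₄)`. -/
def ShF4 : Set (EuclideanSpace ℝ (Fin 4)) :=
  {v | ∃ i : Fin 4, v = e i ∨ v = -e i} ∪
  {v | ∃ ε : Fin 4 → ℝ, (∀ i, ε i = 1 ∨ ε i = -1) ∧ v = (1 / 2 : ℝ) • ∑ i, ε i • e i}

/-- The partition of the long roots of `F₄`:
`Δ_sin1 = {±e₁±e₂, ±e₃±e₄}`, `Δ_sin2 = {±e₁±e₄, ±e₂±e₃}`, `Δ_sin3 = {±e₁±e₃, ±e₂±e₄}`. -/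
def sinF4 : Fin 3 → Set (EuclideanSpace ℝ (Fin 4)) :=
  ![pmSet 0 1 ∪ pmSet 2 3, pmSet 0 3 ∪ pmSet 1 2, pmSet 0 2 ∪ pmSet 1 3]

/-! ### Integer model (doubled coordinates) -/

/-- Integer standard basis vector. -/
def eZ (i : Fin 4) : Fin 4 → ℤ := fun k => if k = i then 1 else 0

/-- Embedding of integer vectors into `ℝ⁴`, halving all coordinates. -/
noncomputable def E (a : Fin 4 → ℤ) : EuclideanSpace ℝ (Fin 4) := WithLp.toLp 2 (fun k => (a k : ℝ) / 2)

lemma E_apply (a : Fin 4 → ℤ) (k : Fin 4) : E a k = (a k : ℝ) / 2 := rfl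

lemma E_add (a b : Fin 4 → ℤ) : E (a + b) = E a + E b := by
  ext k; show ((a k + b k : ℤ) : ℝ) / 2 = (a k : ℝ) / 2 + (b k : ℝ) / 2
  push_cast; ring

lemma E_sub (a b : Fin 4 → ℤ) : E (a - b) = E a - E b := by
  ext k; show ((a k - b k : ℤ) : ℝ) / 2 = (a k : ℝ) / 2 - (b k : ℝ) / 2
  push_cast; ring

lemma E_neg (a : Fin 4 → ℤ) : E (-a) = - E a := by
  ext k; show ((-(a k) : ℤ) : ℝ) / 2 = -((a k : ℝ) / 2)
  push_cast; ring

lemma E_inj {a b : Fin 4 → ℤ} (h : E a = E b) : a = b := by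
  funext k
  have h2 := congrArg (fun v => v k) h
  rw [E_apply, E_apply, div_eq_div_iff (by norm_num) (by norm_num)] at h2
  have : a k * 2 = b k * 2 := by
    have h3 : ((a k * 2 : ℤ) : ℝ) = ((b k * 2 : ℤ) : ℝ) := by push_cast; linarith
    exact_mod_cast h3
  omega

lemma sum_apply' (f : Fin 4 → EuclideanSpace ℝ (Fin 4)) (k : Fin 4) :
    (∑ i, f i) k = ∑ i, f i k := by
  rw [WithLp.ofLp_sum]; exact Finset.sum_apply k Finset.univ _

/-- A doubled `±e_i ± e_j` element. -/
def pmElem (i j : Fin 4) (s t : ℤ) : Fin 4 → ℤ := (2 * s) • eZ i + (2 * t) • eZ j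

def pmList (i j : Fin 4) : List (Fin 4 → ℤ) :=
  [pmElem i j 1 1, pmElem i j 1 (-1), pmElem i j (-1) 1, pmElem i j (-1) (-1)]

def shList : List (Fin 4 → ℤ) :=
  ((List.finRange 4).flatMap fun i => [(2 : ℤ) • eZ i, -((2 : ℤ) • eZ i)]) ++
  (([1, -1] : List ℤ).flatMap fun a => ([1, -1] : List ℤ).flatMap fun b =>
    ([1, -1] : List ℤ).flatMap fun c => ([1, -1] : List ℤ).map fun d =>
      (![a, b, c, d] : Fin 4 → ℤ))

def sinList : Fin 3 → List (Fin 4 → ℤ) :=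
  ![pmList 0 1 ++ pmList 2 3, pmList 0 3 ++ pmList 1 2, pmList 0 2 ++ pmList 1 3]

lemma E_pmElem (i j : Fin 4) (hij : i ≠ j) (s t : ℤ) :
    E (pmElem i j s t) = (s : ℝ) • e i + (t : ℝ) • e j := by
  ext k
  show ((pmElem i j s t k : ℤ) : ℝ) / 2 = ((s : ℝ) • e i + (t : ℝ) • e j) k
  simp only [pmElem, eZ, Pi.add_apply, Pi.smul_apply, smul_eq_mul, mul_ite, mul_one, mul_zero]
  have : ((s : ℝ) • e i + (t : ℝ) • e j) k
      = (s : ℝ) * (if k = i then 1 else 0) + (t : ℝ) * (if k = j then 1 else 0) := by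
    simp [e, EuclideanSpace.single_apply]
  rw [this]
  by_cases hi : k = i <;> by_cases hj : k = j <;> simp_all

lemma mem_pmSet_iff (i j : Fin 4) (hij : i ≠ j) (r : Fin 4 → ℤ) :
    E r ∈ pmSet i j ↔ r ∈ pmList i j := by
  constructor
  · rintro ⟨ε, δ, hε, hδ, h⟩
    rcases hε with rfl | rfl <;> rcases hδ with rfl | rfl
    · have : r = pmElem i j 1 1 := E_inj (by rw [h, E_pmElem i j hij]; norm_num)
      simp [pmList, this]
    · have : r = pmElem i j 1 (-1) := E_inj (by rw [h, E_pmElem i j hij]; norm_num)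
      simp [pmList, this]
    · have : r = pmElem i j (-1) 1 := E_inj (by rw [h, E_pmElem i j hij]; norm_num)
      simp [pmList, this]
    · have : r = pmElem i j (-1) (-1) := E_inj (by rw [h, E_pmElem i j hij]; norm_num)
      simp [pmList, this]
  · intro hr
    simp only [pmList, List.mem_cons, List.mem_singleton, List.not_mem_nil, or_false] at hr
    rcases hr with rfl | rfl | rfl | rfl
    · exact ⟨1, 1, Or.inl rfl, Or.inl rfl, by rw [E_pmElem i j hij]; norm_num⟩
    · exact ⟨1, -1, Or.inl rfl, Or.inr rfl, by rw [E_pmElem i j hij]; norm_num⟩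
    · exact ⟨-1, 1, Or.inr rfl, Or.inl rfl, by rw [E_pmElem i j hij]; norm_num⟩
    · exact ⟨-1, -1, Or.inr rfl, Or.inr rfl, by rw [E_pmElem i j hij]; norm_num⟩

lemma mem_sinF4_iff (i : Fin 3) (r : Fin 4 → ℤ) :
    E r ∈ sinF4 i ↔ r ∈ sinList i := by
  fin_cases i
  · show E r ∈ pmSet 0 1 ∪ pmSet 2 3 ↔ r ∈ pmList 0 1 ++ pmList 2 3
    rw [Set.mem_union, List.mem_append, mem_pmSet_iff 0 1 (by decide),
      mem_pmSet_iff 2 3 (by decide)]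
  · show E r ∈ pmSet 0 3 ∪ pmSet 1 2 ↔ r ∈ pmList 0 3 ++ pmList 1 2
    rw [Set.mem_union, List.mem_append, mem_pmSet_iff 0 3 (by decide),
      mem_pmSet_iff 1 2 (by decide)]
  · show E r ∈ pmSet 0 2 ∪ pmSet 1 3 ↔ r ∈ pmList 0 2 ++ pmList 1 3
    rw [Set.mem_union, List.mem_append, mem_pmSet_iff 0 2 (by decide),
      mem_pmSet_iff 1 3 (by decide)]

lemma E_unit (i : Fin 4) : E ((2 : ℤ) • eZ i) = e i := by
  ext k
  show (((2 : ℤ) • eZ i) k : ℝ) / 2 = e i k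
  simp only [eZ, e, EuclideanSpace.single_apply, Pi.smul_apply, smul_ite, smul_eq_mul,
    mul_one, mul_zero]
  by_cases h : k = i <;> simp [h]

lemma half_mem_shList (a : Fin 4 → ℤ) (h : ∀ k, a k = 1 ∨ a k = -1) : a ∈ shList := by
  have ha : a = ![a 0, a 1, a 2, a 3] := by
    funext k; fin_cases k <;> rfl
  rcases h 0 with h0 | h0 <;> rcases h 1 with h1 | h1 <;> rcases h 2 with h2 | h2 <;>
    rcases h 3 with h3 | h3 <;> rw [ha, h0, h1, h2, h3] <;> decide

lemma mem_ShF4_iff (α : EuclideanSpace ℝ (Fin 4)) :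
    α ∈ ShF4 ↔ ∃ a ∈ shList, α = E a := by
  constructor
  · intro hα
    rcases hα with ⟨i, h | h⟩ | ⟨ε, hε, h⟩
    · exact ⟨(2 : ℤ) • eZ i, by fin_cases i <;> decide, by rw [h, E_unit]⟩
    · refine ⟨-((2 : ℤ) • eZ i), by fin_cases i <;> decide, ?_⟩
      rw [h, E_neg, E_unit]
    · classical
      refine ⟨fun k => if ε k = 1 then 1 else -1, half_mem_shList _ (fun k => by
        by_cases hk : ε k = 1 <;> simp [hk]), ?_⟩
      have hcast : ∀ k, ((if ε k = 1 then (1 : ℤ) else -1 : ℤ) : ℝ) = ε k := by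
        intro k
        rcases hε k with hk | hk
        · simp [hk]
        · rw [hk, if_neg (by norm_num)]; norm_num
      rw [h]; ext k
      rw [E_apply, hcast]
      simp [e, EuclideanSpace.single_apply, sum_apply', Finset.sum_ite_eq']
      ring
  · rintro ⟨a, ha, rfl⟩
    have key : (∃ i, a = (2 : ℤ) • eZ i ∨ a = -((2 : ℤ) • eZ i)) ∨
        (∀ k, a k = 1 ∨ a k = -1) := by
      revert ha; revert a; decide
    rcases key with ⟨i, h | h⟩ | h
    · exact Or.inl ⟨i, Or.inl (by rw [h, E_unit])⟩
    · exact Or.inl ⟨i, Or.inr (by rw [h, E_neg, E_unit])⟩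
    · refine Or.inr ⟨fun k => (a k : ℝ), fun k => ?_, ?_⟩
      · show (a k : ℝ) = 1 ∨ (a k : ℝ) = -1
        rcases h k with hk | hk <;> rw [hk] <;> norm_num
      · ext k
        rw [E_apply]
        simp [e, EuclideanSpace.single_apply, sum_apply', Finset.sum_ite_eq']
        ring

/-- The finite combinatorial core, checked by `decide`. -/
lemma key_decide : ∀ a ∈ shList, ∀ i : Fin 3, ∃ b ∈ shList,
    (a + b) ∈ sinList i ∧ (a - b) ∈ sinList i ∧
    ∀ b' ∈ shList, (a + b') ∈ sinList i → (a - b') ∈ sinList i → b' = b ∨ b' = -b := by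
  decide

/-- for every short root `α` of `F₄` and every `i ∈ {1,2,3}` there is a
short root `β`, unique up to sign, such that `α + β` and `α − β` are both roots lying
in `Δ_sin_i`. -/
theorem matched_partner_exists_unique_F4
    (α : EuclideanSpace ℝ (Fin 4)) (hα : α ∈ ShF4) (i : Fin 3) :
    ∃ β : EuclideanSpace ℝ (Fin 4), β ∈ ShF4 ∧
      α + β ∈ sinF4 i ∧ α - β ∈ sinF4 i ∧
      ∀ β' : EuclideanSpace ℝ (Fin 4), β' ∈ ShF4 →
        α + β' ∈ sinF4 i → α - β' ∈ sinF4 i → β' = β ∨ β' = -β := by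
  obtain ⟨a, ha, rfl⟩ := (mem_ShF4_iff α).1 hα
  obtain ⟨b, hb, hab1, hab2, huniq⟩ := key_decide a ha i
  refine ⟨E b, (mem_ShF4_iff _).2 ⟨b, hb, rfl⟩, ?_, ?_, ?_⟩
  · rw [← E_add]; exact (mem_sinF4_iff i _).2 hab1
  · rw [← E_sub]; exact (mem_sinF4_iff i _).2 hab2
  · intro β' hβ' h1 h2
    obtain ⟨b', hb', rfl⟩ := (mem_ShF4_iff β').1 hβ'
    rw [← E_add] at h1
    rw [← E_sub] at h2
    rcases huniq b' hb' ((mem_sinF4_iff i _).1 h1) ((mem_sinF4_iff i _).1 h2) with h | h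
    · exact Or.inl (by rw [h])
    · exact Or.inr (by rw [h, E_neg])
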